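/- Let μ be an ε-product probability measure on V = V₁×⋯×V_k, let S,T ⊆ [k] with S ≠ T, and let f,g : V → ℝ. Then ⟨f^{=S}, g^{=T}⟩ ≤ 2^{2|S|+2|T|}·ε·‖f‖₂·‖g‖₂. -/

import Mathlib

open Finset

namespace GLL

variable {k : ℕ} {V : Fin k → Type} [∀ i, Fintype (V i)] [∀ i, DecidableEq (V i)]

/-- Expectation of `f` with respect to the (finitely supported) measure `μ`. -/
def expect (μ f : (∀ i, V i) → ℝ) : ℝ := ∑ x, μ x * f x

/-- `μ` is a probability measure. -/
def IsProb (μ : (∀ i, V i) → ℝ) : Prop := (∀ x, 0 ≤ μ x) ∧ ∑ x, μ x = 1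

/-- The marginal `μ_S` evaluated at (the `S`-coordinates of) `x`. -/
def marg (μ : (∀ i, V i) → ℝ) (S : Finset (Fin k)) (x : ∀ i, V i) : ℝ :=
  ∑ z, if ∀ i ∈ S, z i = x i then μ z else 0

/-- The link (conditional) measure `μ_x` for `x ∈ V_S`, viewed as a measure on
full points agreeing with `x` on `S`. -/
noncomputable def cond (μ : (∀ i, V i) → ℝ) (S : Finset (Fin k)) (x z : ∀ i, V i) : ℝ :=
  if ∀ i ∈ S, z i = x i then μ z / marg μ S x else 0

/-- The averaging operator `A_S`: `A_S f (x) = E_{y ∼ μ_{x_S}} [f(x_S, y)]`.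
Applied to an `S'`-junta `f`, this is also the operator `A_{S',S}`. -/
noncomputable def Aop (μ : (∀ i, V i) → ℝ) (S : Finset (Fin k)) (f : (∀ i, V i) → ℝ)
    (x : ∀ i, V i) : ℝ :=
  ∑ z, cond μ S x z * f z

/-- The Efron–Stein component `f^{=S} = ∑_{T ⊆ S} (-1)^{|S∖T|} A_T f`. -/
noncomputable def ES (μ : (∀ i, V i) → ℝ) (S : Finset (Fin k)) (f : (∀ i, V i) → ℝ)
    (x : ∀ i, V i) : ℝ :=
  ∑ T ∈ S.powerset, (-1 : ℝ) ^ (S.card - T.card) * Aop μ T f x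

/-- The low-degree part `f^{≤ d} = ∑_{|S| ≤ d} f^{=S}`. -/
noncomputable def lowPart (μ : (∀ i, V i) → ℝ) (d : ℕ) (f : (∀ i, V i) → ℝ)
    (x : ∀ i, V i) : ℝ :=
  ∑ S ∈ univ.powerset.filter (fun S : Finset (Fin k) => S.card ≤ d), ES μ S f x

/-- The Laplacian `L_S[f] = ∑_{T ⊇ S} f^{=T}`. -/
noncomputable def Lap (μ : (∀ i, V i) → ℝ) (S : Finset (Fin k)) (f : (∀ i, V i) → ℝ)
    (x : ∀ i, V i) : ℝ :=
  ∑ T ∈ univ.powerset.filter (fun T : Finset (Fin k) => S ⊆ T), ES μ T f x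

/-- The truncated Laplacian `L_S^{≤d}[f] = ∑_{T ⊇ S, |T| ≤ d} f^{=T}`. -/
noncomputable def LapLe (μ : (∀ i, V i) → ℝ) (d : ℕ) (S : Finset (Fin k))
    (f : (∀ i, V i) → ℝ) (x : ∀ i, V i) : ℝ :=
  ∑ T ∈ univ.powerset.filter (fun T : Finset (Fin k) => S ⊆ T ∧ T.card ≤ d), ES μ T f x

/-- The influence `I_{S,x}[f] = ‖L_S[f](x,·)‖²_{L²(μ_x)}`. -/
noncomputable def Inf (μ : (∀ i, V i) → ℝ) (S : Finset (Fin k)) (f : (∀ i, V i) → ℝ)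
    (x : ∀ i, V i) : ℝ :=
  ∑ z, cond μ S x z * (Lap μ S f z) ^ 2

/-- The truncated influence `I^{≤d}_{S,x}[f] = ‖L_S^{≤d}[f](x,·)‖²_{L²(μ_x)}`. -/
noncomputable def InfLe (μ : (∀ i, V i) → ℝ) (d : ℕ) (S : Finset (Fin k))
    (f : (∀ i, V i) → ℝ) (x : ∀ i, V i) : ℝ :=
  ∑ z, cond μ S x z * (LapLe μ d S f z) ^ 2

/-- `‖f‖₂²` with respect to `μ`. -/
def normSq (μ f : (∀ i, V i) → ℝ) : ℝ := ∑ x, μ x * (f x) ^ 2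

/-- `‖f‖₄⁴` with respect to `μ`. -/
def norm4p4 (μ f : (∀ i, V i) → ℝ) : ℝ := ∑ x, μ x * (f x) ^ 4

/-- `‖f‖₂` with respect to `μ`. -/
noncomputable def l2norm (μ f : (∀ i, V i) → ℝ) : ℝ := Real.sqrt (normSq μ f)

/-- `‖f‖_∞`: the maximum of `|f|` over the support of `μ`. -/
noncomputable def supNorm (μ f : (∀ i, V i) → ℝ) : ℝ :=
  sSup ((fun x => |f x|) '' {x | 0 < μ x})

/-- Inner product `⟨f, g⟩ = E_{x∼μ}[f(x) g(x)]`. -/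
def inner' (μ f g : (∀ i, V i) → ℝ) : ℝ := ∑ x, μ x * (f x * g x)

/-- The pair `{i,j}`-skeleton of `μ` is `ε`-pseudorandom. -/
def PairPseudo (μ : (∀ i, V i) → ℝ) (ε : ℝ) (i j : Fin k) : Prop :=
  ∀ (f₁ : V i → ℝ) (f₂ : V j → ℝ),
    |expect μ (fun x => f₁ (x i) * f₂ (x j)) -
        expect μ (fun x => f₁ (x i)) * expect μ (fun x => f₂ (x j))| ≤
      ε * Real.sqrt
        ((expect μ (fun x => f₁ (x i) ^ 2) - expect μ (fun x => f₁ (x i)) ^ 2) *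
          (expect μ (fun x => f₂ (x j) ^ 2) - expect μ (fun x => f₂ (x j)) ^ 2))

/-- `μ` is an `ε`-product measure: every link of every restriction of size `≤ k - 2`
has `ε`-pseudorandom skeletons. -/
def EpsProduct (μ : (∀ i, V i) → ℝ) (ε : ℝ) : Prop :=
  ∀ S : Finset (Fin k), S.card ≤ k - 2 → ∀ x, 0 < marg μ S x →
    ∀ i j : Fin k, i ∉ S → j ∉ S → i ≠ j → PairPseudo (cond μ S x) ε i j

/-- `‖f(x,·)‖_{L²(μ_x)}` for `x ∈ V_S`. -/
noncomputable def restrictNorm (μ : (∀ i, V i) → ℝ) (S : Finset (Fin k)) (x : ∀ i, V i)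
    (f : (∀ i, V i) → ℝ) : ℝ :=
  Real.sqrt (∑ z, cond μ S x z * (f z) ^ 2)

/-- `f` is `(d, δ)`-global: all restrictions of at most `d` coordinates have
`2`-norm at most `δ`. -/
def IsGlobal (μ : (∀ i, V i) → ℝ) (d : ℕ) (δ : ℝ) (f : (∀ i, V i) → ℝ) : Prop :=
  ∀ S : Finset (Fin k), S.card ≤ d → ∀ x, 0 < marg μ S x → restrictNorm μ S x f ≤ δ

/-- `f` is an `S`-junta: it depends only on the coordinates in `S`. -/
def Junta (S : Finset (Fin k)) (f : (∀ i, V i) → ℝ) : Prop :=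
  ∀ x y, (∀ i ∈ S, x i = y i) → f x = f y

/-- The noise operator `T_ρ f = ∑_{S ⊆ [k]} ρ^{|S|} (1-ρ)^{k-|S|} A_S f`. -/
noncomputable def noiseOp (μ : (∀ i, V i) → ℝ) (ρ : ℝ) (f : (∀ i, V i) → ℝ)
    (x : ∀ i, V i) : ℝ :=
  ∑ S ∈ (univ : Finset (Fin k)).powerset, ρ ^ S.card * (1 - ρ) ^ (k - S.card) * Aop μ S f x

/-- The up-down walk operator `T = (1/k) ∑_{i=1}^k A_{[k]∖{i}}`. -/
noncomputable def upDown (μ : (∀ i, V i) → ℝ) (f : (∀ i, V i) → ℝ) (x : ∀ i, V i) : ℝ :=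
  (1 / (k : ℝ)) * ∑ i : Fin k, Aop μ (univ.erase i) f x

/-- The product measure `μ₁ ⊗ ⋯ ⊗ μ_k`. -/
def prodMeasure (μi : ∀ i, V i → ℝ) : (∀ i, V i) → ℝ := fun x => ∏ i, μi i (x i)

/-- `f` has degree at most `d`: `f^{=S} = 0` whenever `|S| > d`. -/
def DegLe (μ : (∀ i, V i) → ℝ) (d : ℕ) (f : (∀ i, V i) → ℝ) : Prop :=
  ∀ S : Finset (Fin k), d < S.card → ∀ x, ES μ S f x = 0

/-- `{F S}_{S ⊆ [k]}` is an `(α, ε')`-approximate Efron–Stein decomposition of `f`. -/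
noncomputable def ApproxES (μ : (∀ i, V i) → ℝ) (α ε' : ℝ) (f : (∀ i, V i) → ℝ)
    (F : Finset (Fin k) → (∀ i, V i) → ℝ) : Prop :=
  l2norm μ f ≤ α ∧
    l2norm μ (fun x => f x - ∑ S ∈ (univ : Finset (Fin k)).powerset, F S x) ≤ ε' ∧
    ∀ S : Finset (Fin k), ∃ h : (∀ i, V i) → ℝ,
      l2norm μ h ≤ α ∧ l2norm μ (fun x => ES μ S h x - F S x) ≤ ε'

set_option linter.unusedSectionVars false
set_option maxHeartbeats 1000000

section Basic

variable {μ ν : (∀ i, V i) → ℝ} {B D : Finset (Fin k)} {x y z : ∀ i, V i}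
variable {F G f g h v : (∀ i, V i) → ℝ}

lemma expect_congr (h : ∀ z, μ z ≠ 0 → F z = G z) : expect μ F = expect μ G := by
  unfold expect
  refine Finset.sum_congr rfl fun z _ => ?_
  by_cases hz : μ z = 0
  · simp [hz]
  · rw [h z hz]

lemma expect_add : expect μ (fun z => F z + G z) = expect μ F + expect μ G := by
  simp [expect, mul_add, Finset.sum_add_distrib]

lemma expect_sub : expect μ (fun z => F z - G z) = expect μ F - expect μ G := by
  simp [expect, mul_sub, Finset.sum_sub_distrib]

lemma expect_const_mul (c : ℝ) : expect μ (fun z => c * F z) = c * expect μ F := by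
  simp only [expect, Finset.mul_sum]; exact Finset.sum_congr rfl fun z _ => by ring

lemma expect_const (hμ : IsProb μ) (c : ℝ) : expect μ (fun _ => c) = c := by
  simp [expect, ← Finset.sum_mul, hμ.2]

lemma expect_nonneg (h0 : ∀ x, 0 ≤ μ x) (hF : ∀ z, 0 ≤ F z) : 0 ≤ expect μ F :=
  Finset.sum_nonneg fun z _ => mul_nonneg (h0 z) (hF z)

lemma marg_nonneg (h0 : ∀ x, 0 ≤ μ x) : 0 ≤ marg μ B x := by
  refine Finset.sum_nonneg fun z _ => ?_
  split <;> simp [h0 z]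

lemma le_marg (h0 : ∀ x, 0 ≤ μ x) (hz : ∀ i ∈ B, z i = x i) : μ z ≤ marg μ B x := by
  unfold marg
  have hrw : μ z = if ∀ i ∈ B, z i = x i then μ z else 0 := by rw [if_pos hz]
  rw [hrw]
  refine Finset.single_le_sum (f := fun w => if ∀ i ∈ B, w i = x i then μ w else 0)
    (fun w _ => ?_) (Finset.mem_univ z)
  show (0:ℝ) ≤ if ∀ i ∈ B, w i = x i then μ w else 0
  split
  · exact h0 w
  · exact le_rfl

lemma marg_congr (hz : ∀ i ∈ B, z i = x i) : marg μ B z = marg μ B x := by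
  unfold marg
  refine Finset.sum_congr rfl fun w _ => ?_
  congr 1
  exact propext ⟨fun h i hi => (h i hi).trans (hz i hi), fun h i hi => (h i hi).trans (hz i hi).symm⟩

lemma cond_nonneg (h0 : ∀ x, 0 ≤ μ x) : 0 ≤ cond μ B x z := by
  unfold cond; split
  · exact div_nonneg (h0 z) (marg_nonneg h0)
  · exact le_rfl

lemma cond_congr (hz : ∀ i ∈ B, z i = x i) : cond μ B z = cond μ B x := by
  funext w
  unfold cond
  rw [marg_congr hz]
  congr 1
  exact propext ⟨fun h i hi => (h i hi).trans (hz i hi), fun h i hi => (h i hi).trans (hz i hi).symm⟩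

lemma cond_ne_zero (h : cond μ B x z ≠ 0) : (∀ i ∈ B, z i = x i) ∧ μ z ≠ 0 := by
  unfold cond at h
  split at h
  · next hc => exact ⟨hc, fun h' => h (by simp [h'])⟩
  · exact absurd rfl h

lemma sum_cond (hm : 0 < marg μ B x) : ∑ z, cond μ B x z = 1 := by
  unfold cond
  have hrw : ∀ z : ∀ i, V i, (if ∀ i ∈ B, z i = x i then μ z / marg μ B x else 0)
      = (if ∀ i ∈ B, z i = x i then μ z else 0) / marg μ B x := by
    intro z; split <;> simp
  simp_rw [hrw, ← Finset.sum_div]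
  exact div_self hm.ne'

lemma condIsProb (h0 : ∀ x, 0 ≤ μ x) (hm : 0 < marg μ B x) : IsProb (cond μ B x) :=
  ⟨fun _ => cond_nonneg h0, sum_cond hm⟩

lemma Aop_congr (hz : ∀ i ∈ B, z i = x i) : Aop μ B f z = Aop μ B f x := by
  unfold Aop; rw [cond_congr hz]

lemma Aop_junta : Junta B (Aop μ B f) := fun x y hxy => Aop_congr hxy

lemma Aop_nonneg (h0 : ∀ x, 0 ≤ μ x) (hf : ∀ z, 0 ≤ f z) : 0 ≤ Aop μ B f x :=
  Finset.sum_nonneg fun z _ => mul_nonneg (cond_nonneg h0) (hf z)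

lemma mu_cond_symm (h0 : ∀ x, 0 ≤ μ x) (x z : ∀ i, V i) :
    μ x * cond μ B x z = μ z * cond μ B z x := by
  unfold cond
  by_cases hc : ∀ i ∈ B, z i = x i
  · have hc' : ∀ i ∈ B, x i = z i := fun i hi => (hc i hi).symm
    rw [if_pos hc, if_pos hc', marg_congr hc]
    rw [mul_div_assoc', mul_div_assoc', mul_comm]
  · have hc' : ¬ ∀ i ∈ B, x i = z i := fun h => hc fun i hi => (h i hi).symm
    rw [if_neg hc, if_neg hc', mul_zero, mul_zero]

lemma sum_mu_cond (h0 : ∀ x, 0 ≤ μ x) (z : ∀ i, V i) :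
    ∑ x, μ x * cond μ B x z = μ z := by
  have hrw : ∀ x, μ x * cond μ B x z = μ z * cond μ B z x := fun x => mu_cond_symm h0 x z
  simp_rw [hrw, ← Finset.mul_sum]
  by_cases hm : 0 < marg μ B z
  · rw [sum_cond hm, mul_one]
  · have hm0 : marg μ B z = 0 := le_antisymm (not_lt.1 hm) (marg_nonneg h0)
    have hz0 : μ z = 0 := le_antisymm (hm0 ▸ le_marg h0 (fun i _ => rfl)) (h0 z)
    simp [hz0]

lemma tower (h0 : ∀ x, 0 ≤ μ x) : expect μ (Aop μ B F) = expect μ F := by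
  unfold expect Aop
  simp_rw [Finset.mul_sum]
  rw [Finset.sum_comm]
  refine Finset.sum_congr rfl fun z _ => ?_
  have hrw : ∑ x, μ x * (cond μ B x z * F z) = (∑ x, μ x * cond μ B x z) * F z := by
    rw [Finset.sum_mul]; exact Finset.sum_congr rfl fun x _ => by ring
  rw [hrw, sum_mu_cond h0]

lemma selfAdj (h0 : ∀ x, 0 ≤ μ x) :
    ∑ x, μ x * (Aop μ B F x * G x) = ∑ x, μ x * (F x * Aop μ B G x) := by
  have e1 : ∑ x, μ x * (Aop μ B F x * G x) = ∑ x, ∑ z, (μ x * cond μ B x z) * (F z * G x) := by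
    simp only [Aop, Finset.mul_sum, Finset.sum_mul]
    exact Finset.sum_congr rfl fun x _ => Finset.sum_congr rfl fun z _ => by ring
  have e2 : ∑ x, μ x * (F x * Aop μ B G x) = ∑ x, ∑ z, (μ x * cond μ B x z) * (F x * G z) := by
    simp only [Aop, Finset.mul_sum, Finset.sum_mul]
    exact Finset.sum_congr rfl fun x _ => Finset.sum_congr rfl fun z _ => by ring
  rw [e1, e2, Finset.sum_comm]
  refine Finset.sum_congr rfl fun a _ => Finset.sum_congr rfl fun b _ => ?_
  rw [mu_cond_symm h0]

end Basic
section Analytic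

variable {μ ν ρ : (∀ i, V i) → ℝ} {B D : Finset (Fin k)} {x y z : ∀ i, V i}
variable {F G f g h v : (∀ i, V i) → ℝ}

/-- Variance. -/
noncomputable def Vr (ρ F : (∀ i, V i) → ℝ) : ℝ :=
  expect ρ (fun z => F z ^ 2) - expect ρ F ^ 2

/-- Covariance. -/
noncomputable def Cv (ρ F G : (∀ i, V i) → ℝ) : ℝ :=
  expect ρ (fun z => F z * G z) - expect ρ F * expect ρ G

lemma cauchy (h0 : ∀ x, 0 ≤ ρ x) (F G : (∀ i, V i) → ℝ) :
    |expect ρ (fun z => F z * G z)| ≤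
      Real.sqrt (expect ρ (fun z => F z ^ 2)) * Real.sqrt (expect ρ (fun z => G z ^ 2)) := by
  have key : (expect ρ (fun z => F z * G z)) ^ 2 ≤
      (expect ρ (fun z => F z ^ 2)) * (expect ρ (fun z => G z ^ 2)) := by
    have hcs := Finset.sum_mul_sq_le_sq_mul_sq Finset.univ
      (fun z => Real.sqrt (ρ z) * F z) (fun z => Real.sqrt (ρ z) * G z)
    have e1 : ∑ z, (Real.sqrt (ρ z) * F z) * (Real.sqrt (ρ z) * G z)
        = expect ρ (fun z => F z * G z) := by
      refine Finset.sum_congr rfl fun z _ => ?_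
      have hs : Real.sqrt (ρ z) * Real.sqrt (ρ z) = ρ z := Real.mul_self_sqrt (h0 z)
      calc (Real.sqrt (ρ z) * F z) * (Real.sqrt (ρ z) * G z)
          = (Real.sqrt (ρ z) * Real.sqrt (ρ z)) * (F z * G z) := by ring
        _ = ρ z * (F z * G z) := by rw [hs]
    have e2 : ∑ z, (Real.sqrt (ρ z) * F z) ^ 2 = expect ρ (fun z => F z ^ 2) := by
      refine Finset.sum_congr rfl fun z _ => ?_
      rw [mul_pow, Real.sq_sqrt (h0 z)]
    have e3 : ∑ z, (Real.sqrt (ρ z) * G z) ^ 2 = expect ρ (fun z => G z ^ 2) := by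
      refine Finset.sum_congr rfl fun z _ => ?_
      rw [mul_pow, Real.sq_sqrt (h0 z)]
    rw [e1, e2, e3] at hcs
    exact hcs
  have hP : 0 ≤ expect ρ (fun z => F z ^ 2) := expect_nonneg h0 fun z => sq_nonneg _
  calc |expect ρ (fun z => F z * G z)|
      = Real.sqrt ((expect ρ (fun z => F z * G z)) ^ 2) := (Real.sqrt_sq_eq_abs _).symm
    _ ≤ Real.sqrt ((expect ρ (fun z => F z ^ 2)) * (expect ρ (fun z => G z ^ 2))) :=
        Real.sqrt_le_sqrt key
    _ = _ := Real.sqrt_mul hP _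

lemma sq_expect_le (hρ : IsProb ρ) (F : (∀ i, V i) → ℝ) :
    (expect ρ F) ^ 2 ≤ expect ρ (fun z => F z ^ 2) := by
  have h := cauchy (ρ := ρ) hρ.1 F (fun _ => 1)
  have e1 : expect ρ (fun z => F z * 1) = expect ρ F := by
    unfold expect; exact Finset.sum_congr rfl fun z _ => by ring
  have e2 : expect ρ (fun _ : ∀ i, V i => (1:ℝ) ^ 2) = 1 := by
    simpa using expect_const hρ 1
  rw [e1, e2, Real.sqrt_one, mul_one] at h
  have hP : 0 ≤ expect ρ (fun z => F z ^ 2) := expect_nonneg hρ.1 fun z => sq_nonneg _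
  calc (expect ρ F) ^ 2 = |expect ρ F| ^ 2 := (sq_abs _).symm
    _ ≤ Real.sqrt (expect ρ (fun z => F z ^ 2)) ^ 2 := by
        exact pow_le_pow_left₀ (abs_nonneg _) h 2
    _ = expect ρ (fun z => F z ^ 2) := Real.sq_sqrt hP

lemma Vr_nonneg (hρ : IsProb ρ) (F : (∀ i, V i) → ℝ) : 0 ≤ Vr ρ F :=
  sub_nonneg.2 (sq_expect_le hρ F)

lemma Vr_le (hρ : IsProb ρ) (F : (∀ i, V i) → ℝ) : Vr ρ F ≤ expect ρ (fun z => F z ^ 2) := by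
  unfold Vr
  have : 0 ≤ expect ρ F ^ 2 := sq_nonneg _
  linarith

lemma Aop_eq_expect : Aop μ B f x = expect (cond μ B x) f := rfl

lemma marg_pos (h0 : ∀ x, 0 ≤ μ x) (hx : μ x ≠ 0) : 0 < marg μ B x :=
  lt_of_lt_of_le ((h0 x).lt_of_ne (Ne.symm hx)) (le_marg h0 fun i _ => rfl)

lemma jensen_ae (h0 : ∀ x, 0 ≤ μ x) (hx : μ x ≠ 0) :
    (Aop μ B F x) ^ 2 ≤ Aop μ B (fun z => F z ^ 2) x := by
  have hm : 0 < marg μ B x := marg_pos h0 hx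
  simpa [Aop_eq_expect] using sq_expect_le (condIsProb h0 hm) F

lemma Aop_idem (h0 : ∀ x, 0 ≤ μ x) (hx : μ x ≠ 0) :
    Aop μ B (Aop μ B F) x = Aop μ B F x := by
  have hm : 0 < marg μ B x := marg_pos h0 hx
  rw [Aop_eq_expect]
  have e : expect (cond μ B x) (Aop μ B F) = expect (cond μ B x) (fun _ => Aop μ B F x) :=
    expect_congr fun z hz => Aop_congr (cond_ne_zero hz).1
  rw [e, expect_const (condIsProb h0 hm)]

lemma normSq_eq_expect : normSq μ f = expect μ (fun z => f z ^ 2) := rfl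

lemma normSq_Aop_le (hμ : IsProb μ) : normSq μ (Aop μ B f) ≤ normSq μ f := by
  have step : normSq μ (Aop μ B f) ≤ expect μ (Aop μ B (fun z => f z ^ 2)) := by
    unfold normSq expect
    refine Finset.sum_le_sum fun x _ => ?_
    by_cases hx : μ x = 0
    · simp [hx]
    · exact mul_le_mul_of_nonneg_left (jensen_ae hμ.1 hx) (hμ.1 x)
  rw [tower hμ.1] at step
  exact step

lemma margCond (h0 : ∀ x, 0 ≤ μ x) (hy : ∀ i ∈ B, y i = x i) :
    marg (cond μ B x) D y = marg μ (B ∪ D) y / marg μ B x := by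
  unfold marg
  rw [Finset.sum_div]
  refine Finset.sum_congr rfl fun z _ => ?_
  unfold cond
  by_cases hD : ∀ i ∈ D, z i = y i
  · rw [if_pos hD]
    by_cases hB : ∀ i ∈ B, z i = x i
    · have hBD : ∀ i ∈ B ∪ D, z i = y i := by
        intro i hi
        rcases Finset.mem_union.1 hi with h' | h'
        · exact (hB i h').trans (hy i h').symm
        · exact hD i h'
      rw [if_pos hB, if_pos hBD]
      rfl
    · have hBD : ¬ ∀ i ∈ B ∪ D, z i = y i := fun hA =>
        hB fun i hi => (hA i (Finset.mem_union_left _ hi)).trans (hy i hi)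
      rw [if_neg hB, if_neg hBD, zero_div]
  · have hBD : ¬ ∀ i ∈ B ∪ D, z i = y i := fun hA =>
      hD fun i hi => hA i (Finset.mem_union_right _ hi)
    rw [if_neg hD, if_neg hBD, zero_div]

lemma condCond (h0 : ∀ x, 0 ≤ μ x) (hm : 0 < marg μ B x) (hy : ∀ i ∈ B, y i = x i) :
    cond (cond μ B x) D y = cond μ (B ∪ D) y := by
  funext z
  show (if ∀ i ∈ D, z i = y i then cond μ B x z / marg (cond μ B x) D y else 0)
      = (if ∀ i ∈ B ∪ D, z i = y i then μ z / marg μ (B ∪ D) y else 0)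
  rw [margCond h0 hy]
  by_cases hD : ∀ i ∈ D, z i = y i
  · by_cases hB : ∀ i ∈ B, z i = x i
    · have hBD : ∀ i ∈ B ∪ D, z i = y i := by
        intro i hi
        rcases Finset.mem_union.1 hi with h' | h'
        · exact (hB i h').trans (hy i h').symm
        · exact hD i h'
      rw [if_pos hD, if_pos hBD]
      show cond μ B x z / (marg μ (B ∪ D) y / marg μ B x) = μ z / marg μ (B ∪ D) y
      unfold cond
      rw [if_pos hB]
      by_cases hM : marg μ (B ∪ D) y = 0
      · have hz0 : μ z = 0 := le_antisymm (hM ▸ le_marg h0 hBD) (h0 z)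
        simp [hz0]
      · have hm' : marg μ B x ≠ 0 := hm.ne'
        field_simp
    · have hBD : ¬ ∀ i ∈ B ∪ D, z i = y i := fun hA =>
        hB fun i hi => (hA i (Finset.mem_union_left _ hi)).trans (hy i hi)
      rw [if_pos hD, if_neg hBD]
      show cond μ B x z / (marg μ (B ∪ D) y / marg μ B x) = 0
      unfold cond
      rw [if_neg hB, zero_div]
  · have hBD : ¬ ∀ i ∈ B ∪ D, z i = y i := fun hA =>
      hD fun i hi => hA i (Finset.mem_union_right _ hi)
    rw [if_neg hD, if_neg hBD]

lemma sum_link_var (hν : IsProb ν) (F : (∀ i, V i) → ℝ) :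
    ∑ y, ν y * (Aop ν D (fun z => F z ^ 2) y - (Aop ν D F y) ^ 2) ≤ Vr ν F := by
  have h1 : ∑ y, ν y * Aop ν D (fun z => F z ^ 2) y = expect ν (fun z => F z ^ 2) :=
    tower hν.1
  have h2 : (expect ν F) ^ 2 ≤ ∑ y, ν y * (Aop ν D F y) ^ 2 := by
    have hsq := sq_expect_le hν (Aop ν D F)
    rw [tower hν.1] at hsq
    exact hsq
  have e : ∑ y, ν y * (Aop ν D (fun z => F z ^ 2) y - (Aop ν D F y) ^ 2)
      = (∑ y, ν y * Aop ν D (fun z => F z ^ 2) y) - ∑ y, ν y * (Aop ν D F y) ^ 2 := by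
    simp [mul_sub, Finset.sum_sub_distrib]
  rw [e, h1]
  unfold Vr
  linarith

lemma card_le_ksub2 {B : Finset (Fin k)} {i j : Fin k} (hiB : i ∉ B) (hjB : j ∉ B)
    (hij : i ≠ j) : B.card ≤ k - 2 := by
  have hsub : B ⊆ (Finset.univ.erase i).erase j := by
    intro a ha
    exact Finset.mem_erase.2 ⟨fun h => hjB (h ▸ ha),
      Finset.mem_erase.2 ⟨fun h => hiB (h ▸ ha), Finset.mem_univ a⟩⟩
  have hc := Finset.card_le_card hsub
  rw [Finset.card_erase_of_mem (Finset.mem_erase.2 ⟨hij.symm, Finset.mem_univ j⟩),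
    Finset.card_erase_of_mem (Finset.mem_univ i), Finset.card_univ, Fintype.card_fin] at hc
  omega

end Analytic
section CovLemma

variable {μ ν : (∀ i, V i) → ℝ} {ε : ℝ} {B D : Finset (Fin k)} {x y z : ∀ i, V i}
variable {F G f g v : (∀ i, V i) → ℝ}

lemma expect_mul_const (c : ℝ) (F : (∀ i, V i) → ℝ) :
    expect μ (fun z => F z * c) = expect μ F * c := by
  simp only [expect, Finset.sum_mul]; exact Finset.sum_congr rfl fun z _ => by ring

lemma Aop_of_marg_zero (h : marg ν D y = 0) (F : (∀ i, V i) → ℝ) : Aop ν D F y = 0 := by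
  unfold Aop cond
  rw [h]
  simp

lemma linkVar_nonneg (h0 : ∀ w, 0 ≤ ν w) (y : ∀ i, V i) (F : (∀ i, V i) → ℝ) :
    0 ≤ Aop ν D (fun z => F z ^ 2) y - (Aop ν D F y) ^ 2 := by
  by_cases hm : 0 < marg ν D y
  · have hvr := Vr_nonneg (condIsProb h0 hm) F
    simpa [Vr, Aop_eq_expect] using hvr
  · have hm0 : marg ν D y = 0 := le_antisymm (not_lt.1 hm) (marg_nonneg h0)
    rw [Aop_of_marg_zero hm0, Aop_of_marg_zero hm0]
    simp

lemma cov_bound (hμ : IsProb μ) (hprod : EpsProduct μ ε) (hε : 0 ≤ ε) :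
    ∀ C : Finset (Fin k), ∀ B : Finset (Fin k), ∀ x : ∀ i, V i,
      Disjoint B C → 0 < marg μ B x → ∀ i : Fin k, i ∉ B → i ∉ C →
      ∀ (u : V i → ℝ) (v : (∀ i, V i) → ℝ), Junta C v →
      |Cv (cond μ B x) (fun z => u (z i)) v| ≤
        C.card * ε * Real.sqrt
          (Vr (cond μ B x) (fun z => u (z i)) * Vr (cond μ B x) v) := by
  intro C
  induction C using Finset.strongInduction with
  | _ C ih =>
  intro B x hdisj hm i hiB hiC u v hv
  have h0 : ∀ w, 0 ≤ μ w := hμ.1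
  have hνP : IsProb (cond μ B x) := condIsProb h0 hm
  rcases Finset.eq_empty_or_nonempty C with hC | ⟨j, hj⟩
  · -- base case : v is constant
    subst hC
    have e1 : expect (cond μ B x) (fun z => u (z i) * v z)
        = expect (cond μ B x) (fun z => u (z i)) * v x := by
      have hfe : (fun z : ∀ t, V t => u (z i) * v z) = fun z => u (z i) * v x :=
        funext fun z => by rw [hv z x (by simp)]
      rw [hfe, expect_mul_const]
    have e2 : expect (cond μ B x) v = v x := by
      have hfe : v = fun _ : ∀ t, V t => v x := funext fun z => hv z x (by simp)
      rw [hfe, expect_const hνP]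
    have hz : Cv (cond μ B x) (fun z => u (z i)) v = 0 := by
      unfold Cv; rw [e1, e2]; ring
    rw [hz]
    simp
  · -- inductive case
    have hij : i ≠ j := fun h => hiC (h ▸ hj)
    have hjB : j ∉ B := fun h => (Finset.disjoint_left.1 hdisj h) hj
    have hEA : expect (cond μ B x) (Aop (cond μ B x) {j} v) = expect (cond μ B x) v :=
      tower hνP.1
    -- Step A : decomposition
    have decomp : Cv (cond μ B x) (fun z => u (z i)) v
        = Cv (cond μ B x) (fun z => u (z i)) (Aop (cond μ B x) {j} v)
          + expect (cond μ B x) (fun z => u (z i) * (v z - Aop (cond μ B x) {j} v z)) := by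
      unfold Cv
      have e : expect (cond μ B x) (fun z => u (z i) * (v z - Aop (cond μ B x) {j} v z))
          = expect (cond μ B x) (fun z => u (z i) * v z)
            - expect (cond μ B x) (fun z => u (z i) * Aop (cond μ B x) {j} v z) := by
        rw [← expect_sub]; congr 1; funext z; ring
      rw [e, hEA]; ring
    -- Step B : pseudorandom pair bound
    have hBk : B.card ≤ k - 2 := card_le_ksub2 hiB hjB hij
    have hPP := hprod B hBk x hm i j hiB hjB hij
    have hAjv : ∀ z : ∀ t, V t, Aop (cond μ B x) {j} v z
        = Aop (cond μ B x) {j} v (Function.update x j (z j)) := by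
      intro z
      refine Aop_congr fun t ht => ?_
      rw [Finset.mem_singleton] at ht; subst ht
      rw [Function.update_self]
    have hB1' : |Cv (cond μ B x) (fun z => u (z i)) (Aop (cond μ B x) {j} v)|
        ≤ ε * Real.sqrt (Vr (cond μ B x) (fun z => u (z i))
            * Vr (cond μ B x) (Aop (cond μ B x) {j} v)) := by
      have hB1 := hPP u (fun b => Aop (cond μ B x) {j} v (Function.update x j b))
      have e1 : expect (cond μ B x)
            (fun z => u (z i) * Aop (cond μ B x) {j} v (Function.update x j (z j)))
          = expect (cond μ B x) (fun z => u (z i) * Aop (cond μ B x) {j} v z) :=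
        expect_congr fun z _ => by rw [← hAjv z]
      have e2 : expect (cond μ B x)
            (fun z => Aop (cond μ B x) {j} v (Function.update x j (z j)))
          = expect (cond μ B x) (Aop (cond μ B x) {j} v) :=
        expect_congr fun z _ => by rw [← hAjv z]
      have e3 : expect (cond μ B x)
            (fun z => Aop (cond μ B x) {j} v (Function.update x j (z j)) ^ 2)
          = expect (cond μ B x) (fun z => Aop (cond μ B x) {j} v z ^ 2) :=
        expect_congr fun z _ => by rw [← hAjv z]
      rw [e1, e2, e3] at hB1
      simpa [Cv, Vr] using hB1
    have hVAjv : Vr (cond μ B x) (Aop (cond μ B x) {j} v) ≤ Vr (cond μ B x) v := by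
      unfold Vr
      rw [hEA]
      have hle : expect (cond μ B x) (fun z => Aop (cond μ B x) {j} v z ^ 2)
          ≤ expect (cond μ B x) (fun z => v z ^ 2) := by
        have step : expect (cond μ B x) (fun z => Aop (cond μ B x) {j} v z ^ 2)
            ≤ expect (cond μ B x) (Aop (cond μ B x) {j} (fun z => v z ^ 2)) := by
          unfold expect
          refine Finset.sum_le_sum fun w _ => ?_
          by_cases hw : cond μ B x w = 0
          · simp [hw]
          · exact mul_le_mul_of_nonneg_left (jensen_ae hνP.1 hw) (hνP.1 w)
        rw [tower hνP.1] at step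
        exact step
      linarith
    have hVU0 : 0 ≤ Vr (cond μ B x) (fun z => u (z i)) := Vr_nonneg hνP _
    have hB2 : |Cv (cond μ B x) (fun z => u (z i)) (Aop (cond μ B x) {j} v)|
        ≤ ε * Real.sqrt (Vr (cond μ B x) (fun z => u (z i)) * Vr (cond μ B x) v) := by
      refine hB1'.trans (mul_le_mul_of_nonneg_left (Real.sqrt_le_sqrt ?_) hε)
      exact mul_le_mul_of_nonneg_left hVAjv hVU0
    -- Step C : conditioning on coordinate j
    have hTow : expect (cond μ B x) (fun z => u (z i) * (v z - Aop (cond μ B x) {j} v z))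
        = ∑ y, cond μ B x y * Aop (cond μ B x) {j}
            (fun z => u (z i) * (v z - Aop (cond μ B x) {j} v z)) y :=
      (tower (B := {j}) hνP.1).symm
    have hpoint : ∀ y : ∀ t, V t, cond μ B x y ≠ 0 →
        Aop (cond μ B x) {j} (fun z => u (z i) * (v z - Aop (cond μ B x) {j} v z)) y
          = Cv (cond μ (B ∪ {j}) y) (fun z => u (z i))
              (fun z => v (Function.update z j (y j)))
        ∧ Vr (cond μ (B ∪ {j}) y) (fun z => u (z i))
            = Aop (cond μ B x) {j} (fun z => u (z i) ^ 2) y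
              - (Aop (cond μ B x) {j} (fun z => u (z i)) y) ^ 2
        ∧ Vr (cond μ (B ∪ {j}) y) (fun z => v (Function.update z j (y j)))
            = Aop (cond μ B x) {j} (fun z => v z ^ 2) y
              - (Aop (cond μ B x) {j} v y) ^ 2 := by
      intro y hy
      have hyx := (cond_ne_zero hy).1
      have hμy : μ y ≠ 0 := (cond_ne_zero hy).2
      have hmy : 0 < marg μ (B ∪ {j}) y := marg_pos h0 hμy
      have hcc : cond (cond μ B x) {j} y = cond μ (B ∪ {j}) y := condCond h0 hm hyx
      have hsupp : ∀ z : ∀ t, V t, cond μ (B ∪ {j}) y z ≠ 0 →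
          Function.update z j (y j) = z := by
        intro z hz
        have hzy := (cond_ne_zero hz).1
        have hzj : z j = y j := hzy j (Finset.mem_union_right _ (Finset.mem_singleton_self j))
        rw [← hzj]
        exact Function.update_eq_self j z
      have hEv : expect (cond μ (B ∪ {j}) y) (fun z => v (Function.update z j (y j)))
          = Aop (cond μ B x) {j} v y := by
        rw [Aop_eq_expect, hcc]
        exact expect_congr fun z hz => by rw [hsupp z hz]
      refine ⟨?_, ?_, ?_⟩
      · have hW : Aop (cond μ B x) {j}
              (fun z => u (z i) * (v z - Aop (cond μ B x) {j} v z)) y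
            = expect (cond μ (B ∪ {j}) y)
                (fun z => u (z i) * (v (Function.update z j (y j))
                  - Aop (cond μ B x) {j} v y)) := by
          rw [Aop_eq_expect, hcc]
          refine expect_congr fun z hz => ?_
          have h1 := hsupp z hz
          have hAz : Aop (cond μ B x) {j} v z = Aop (cond μ B x) {j} v y := by
            refine Aop_congr fun t ht => ?_
            rw [Finset.mem_singleton] at ht; subst ht
            exact (cond_ne_zero hz).1 t (Finset.mem_union_right _ (Finset.mem_singleton_self t))
          rw [hAz, h1]
        rw [hW]
        unfold Cv
        have e : expect (cond μ (B ∪ {j}) y)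
              (fun z => u (z i) * (v (Function.update z j (y j))
                - Aop (cond μ B x) {j} v y))
            = expect (cond μ (B ∪ {j}) y)
                (fun z => u (z i) * v (Function.update z j (y j)))
              - expect (cond μ (B ∪ {j}) y)
                  (fun z => u (z i) * Aop (cond μ B x) {j} v y) := by
          rw [← expect_sub]; congr 1; funext z; ring
        have e2 : expect (cond μ (B ∪ {j}) y)
              (fun z => u (z i) * Aop (cond μ B x) {j} v y)
            = expect (cond μ (B ∪ {j}) y) (fun z => u (z i)) * Aop (cond μ B x) {j} v y :=
          expect_mul_const _ _
        rw [e, e2, ← hEv]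
      · unfold Vr
        rw [Aop_eq_expect, Aop_eq_expect, hcc]
      · unfold Vr
        rw [Aop_eq_expect, Aop_eq_expect, hcc]
        have ea : expect (cond μ (B ∪ {j}) y) (fun z => v (Function.update z j (y j)) ^ 2)
            = expect (cond μ (B ∪ {j}) y) (fun z => v z ^ 2) :=
          expect_congr fun z hz => by rw [hsupp z hz]
        have eb : expect (cond μ (B ∪ {j}) y) (fun z => v (Function.update z j (y j)))
            = expect (cond μ (B ∪ {j}) y) v :=
          expect_congr fun z hz => by rw [hsupp z hz]
        rw [ea, eb]
    -- induction hypothesis applied on the links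
    have hIH : ∀ y : ∀ t, V t, cond μ B x y ≠ 0 →
        |Aop (cond μ B x) {j} (fun z => u (z i) * (v z - Aop (cond μ B x) {j} v z)) y|
          ≤ (C.erase j).card * ε *
            (Real.sqrt (Aop (cond μ B x) {j} (fun z => u (z i) ^ 2) y
                - (Aop (cond μ B x) {j} (fun z => u (z i)) y) ^ 2)
              * Real.sqrt (Aop (cond μ B x) {j} (fun z => v z ^ 2) y
                - (Aop (cond μ B x) {j} v y) ^ 2)) := by
      intro y hy
      obtain ⟨hW, hVU, hVv⟩ := hpoint y hy
      have hyx := (cond_ne_zero hy).1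
      have hμy : μ y ≠ 0 := (cond_ne_zero hy).2
      have hmy : 0 < marg μ (B ∪ {j}) y := marg_pos h0 hμy
      have hdisj' : Disjoint (B ∪ {j}) (C.erase j) := by
        rw [Finset.disjoint_union_left]
        exact ⟨hdisj.mono_right (Finset.erase_subset _ _),
          Finset.disjoint_singleton_left.2 (Finset.notMem_erase j C)⟩
      have hiB' : i ∉ B ∪ {j} := by
        rw [Finset.mem_union, Finset.mem_singleton]
        rintro (h | h)
        · exact hiB h
        · exact hij h
      have hiC' : i ∉ C.erase j := fun h => hiC (Finset.mem_of_mem_erase h)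
      have hjunta : Junta (C.erase j) (fun z => v (Function.update z j (y j))) := by
        intro a b hab
        refine hv _ _ fun t ht => ?_
        by_cases htj : t = j
        · subst htj; simp [Function.update_self]
        · rw [Function.update_of_ne htj, Function.update_of_ne htj]
          exact hab t (Finset.mem_erase.2 ⟨htj, ht⟩)
      have hih := ih (C.erase j) (Finset.erase_ssubset hj) (B ∪ {j}) y hdisj' hmy i
        hiB' hiC' u (fun z => v (Function.update z j (y j))) hjunta
      rw [hW]
      rw [hVU, hVv] at hih
      refine hih.trans (le_of_eq ?_)
      congr 1
      exact Real.sqrt_mul (by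
        have := hVU ▸ Vr_nonneg (condIsProb h0 hmy)
          (F := fun z : ∀ t, V t => u (z i)); exact this) _
    -- aggregate
    have hT2 : |expect (cond μ B x)
          (fun z => u (z i) * (v z - Aop (cond μ B x) {j} v z))|
        ≤ (C.erase j).card * ε *
          Real.sqrt (Vr (cond μ B x) (fun z => u (z i)) * Vr (cond μ B x) v) := by
      rw [hTow]
      have haU : ∀ y : ∀ t, V t, 0 ≤ Aop (cond μ B x) {j} (fun z => u (z i) ^ 2) y
          - (Aop (cond μ B x) {j} (fun z => u (z i)) y) ^ 2 :=
        fun y => linkVar_nonneg hνP.1 y _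
      have hav : ∀ y : ∀ t, V t, 0 ≤ Aop (cond μ B x) {j} (fun z => v z ^ 2) y
          - (Aop (cond μ B x) {j} v y) ^ 2 :=
        fun y => linkVar_nonneg hνP.1 y _
      calc |∑ y, cond μ B x y * Aop (cond μ B x) {j}
              (fun z => u (z i) * (v z - Aop (cond μ B x) {j} v z)) y|
          ≤ ∑ y, |cond μ B x y * Aop (cond μ B x) {j}
              (fun z => u (z i) * (v z - Aop (cond μ B x) {j} v z)) y| :=
            Finset.abs_sum_le_sum_abs _ _
        _ ≤ ∑ y, cond μ B x y * ((C.erase j).card * ε *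
              (Real.sqrt (Aop (cond μ B x) {j} (fun z => u (z i) ^ 2) y
                - (Aop (cond μ B x) {j} (fun z => u (z i)) y) ^ 2)
              * Real.sqrt (Aop (cond μ B x) {j} (fun z => v z ^ 2) y
                - (Aop (cond μ B x) {j} v y) ^ 2))) := by
            refine Finset.sum_le_sum fun y _ => ?_
            by_cases hy : cond μ B x y = 0
            · simp only [hy, zero_mul, abs_zero]
              exact le_rfl
            · rw [abs_mul, abs_of_nonneg (hνP.1 y)]
              exact mul_le_mul_of_nonneg_left (hIH y hy) (hνP.1 y)
        _ = (C.erase j).card * ε * expect (cond μ B x)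
              (fun y => Real.sqrt (Aop (cond μ B x) {j} (fun z => u (z i) ^ 2) y
                - (Aop (cond μ B x) {j} (fun z => u (z i)) y) ^ 2)
              * Real.sqrt (Aop (cond μ B x) {j} (fun z => v z ^ 2) y
                - (Aop (cond μ B x) {j} v y) ^ 2)) := by
            unfold expect
            rw [Finset.mul_sum]
            exact Finset.sum_congr rfl fun y _ => by ring
        _ ≤ (C.erase j).card * ε *
              (Real.sqrt (expect (cond μ B x)
                (fun y => Aop (cond μ B x) {j} (fun z => u (z i) ^ 2) y
                  - (Aop (cond μ B x) {j} (fun z => u (z i)) y) ^ 2))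
              * Real.sqrt (expect (cond μ B x)
                (fun y => Aop (cond μ B x) {j} (fun z => v z ^ 2) y
                  - (Aop (cond μ B x) {j} v y) ^ 2))) := by
            refine mul_le_mul_of_nonneg_left ?_ (mul_nonneg (Nat.cast_nonneg _) hε)
            have hcs := cauchy (ρ := cond μ B x) hνP.1
              (fun y => Real.sqrt (Aop (cond μ B x) {j} (fun z => u (z i) ^ 2) y
                - (Aop (cond μ B x) {j} (fun z => u (z i)) y) ^ 2))
              (fun y => Real.sqrt (Aop (cond μ B x) {j} (fun z => v z ^ 2) y
                - (Aop (cond μ B x) {j} v y) ^ 2))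
            have e1 : expect (cond μ B x)
                (fun y => Real.sqrt (Aop (cond μ B x) {j} (fun z => u (z i) ^ 2) y
                  - (Aop (cond μ B x) {j} (fun z => u (z i)) y) ^ 2) ^ 2)
                = expect (cond μ B x)
                  (fun y => Aop (cond μ B x) {j} (fun z => u (z i) ^ 2) y
                    - (Aop (cond μ B x) {j} (fun z => u (z i)) y) ^ 2) :=
              expect_congr fun y _ => Real.sq_sqrt (haU y)
            have e2 : expect (cond μ B x)
                (fun y => Real.sqrt (Aop (cond μ B x) {j} (fun z => v z ^ 2) y
                  - (Aop (cond μ B x) {j} v y) ^ 2) ^ 2)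
                = expect (cond μ B x)
                  (fun y => Aop (cond μ B x) {j} (fun z => v z ^ 2) y
                    - (Aop (cond μ B x) {j} v y) ^ 2) :=
              expect_congr fun y _ => Real.sq_sqrt (hav y)
            rw [e1, e2] at hcs
            exact (le_abs_self _).trans hcs
        _ ≤ (C.erase j).card * ε *
              (Real.sqrt (Vr (cond μ B x) (fun z => u (z i)))
                * Real.sqrt (Vr (cond μ B x) v)) := by
            refine mul_le_mul_of_nonneg_left ?_ (mul_nonneg (Nat.cast_nonneg _) hε)
            refine mul_le_mul (Real.sqrt_le_sqrt ?_) (Real.sqrt_le_sqrt ?_)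
              (Real.sqrt_nonneg _) (Real.sqrt_nonneg _)
            · exact sum_link_var hνP (fun z => u (z i))
            · exact sum_link_var hνP v
        _ = (C.erase j).card * ε *
              Real.sqrt (Vr (cond μ B x) (fun z => u (z i)) * Vr (cond μ B x) v) := by
            rw [Real.sqrt_mul hVU0]
    -- combine
    have hcard : (1 : ℝ) + (C.erase j).card = C.card := by
      rw [Finset.card_erase_of_mem hj]
      have h1 : 1 ≤ C.card := Finset.card_pos.2 ⟨j, hj⟩
      rw [Nat.cast_sub h1]
      ring
    calc |Cv (cond μ B x) (fun z => u (z i)) v|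
        ≤ |Cv (cond μ B x) (fun z => u (z i)) (Aop (cond μ B x) {j} v)|
          + |expect (cond μ B x)
              (fun z => u (z i) * (v z - Aop (cond μ B x) {j} v z))| := by
          rw [decomp]; exact abs_add_le _ _
      _ ≤ ε * Real.sqrt (Vr (cond μ B x) (fun z => u (z i)) * Vr (cond μ B x) v)
          + (C.erase j).card * ε *
            Real.sqrt (Vr (cond μ B x) (fun z => u (z i)) * Vr (cond μ B x) v) :=
          add_le_add hB2 hT2
      _ = ((1 : ℝ) + (C.erase j).card) * ε *
            Real.sqrt (Vr (cond μ B x) (fun z => u (z i)) * Vr (cond μ B x) v) := by ring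
      _ = _ := by rw [hcard]

end CovLemma
section Crux

variable {μ : (∀ i, V i) → ℝ} {ε : ℝ}

lemma crux (hμ : IsProb μ) (hprod : EpsProduct μ ε) (hε : 0 ≤ ε)
    (A B : Finset (Fin k)) (i : Fin k) (hiA : i ∉ A) (hiB : i ∉ B)
    (h g : (∀ i, V i) → ℝ) (hh : Junta A h) :
    |∑ x, μ x * ((Aop μ (insert i B) h x - Aop μ B h x) * g x)|
      ≤ A.card * ε * (Real.sqrt (normSq μ h) * Real.sqrt (normSq μ g)) := by
  have h0 : ∀ w, 0 ≤ μ w := hμ.1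
  have hins : insert i B = B ∪ {i} := by rw [Finset.insert_eq, Finset.union_comm]
  -- pointwise bound
  have hpt : ∀ x : ∀ t, V t, μ x ≠ 0 →
      |Aop μ B (fun z => (Aop μ (insert i B) h z - Aop μ B h z) * g z) x|
        ≤ A.card * ε * (Real.sqrt (Aop μ B (fun z => h z ^ 2) x)
            * Real.sqrt (Aop μ B (fun z => g z ^ 2) x)) := by
    intro x hx
    have hm : 0 < marg μ B x := marg_pos h0 hx
    have hνP : IsProb (cond μ B x) := condIsProb h0 hm
    -- ψ agrees with the difference on the support
    have hψi : ∀ z : ∀ t, V t, cond μ B x z ≠ 0 →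
        Aop μ (insert i B) h z = Aop (cond μ B x) {i} h z := by
      intro z hz
      have hzx := (cond_ne_zero hz).1
      have hcc : cond (cond μ B x) {i} z = cond μ (B ∪ {i}) z := condCond h0 hm hzx
      rw [hins]
      unfold Aop
      rw [hcc]
    have hφψ : ∀ z : ∀ t, V t, cond μ B x z ≠ 0 →
        (Aop μ (insert i B) h z - Aop μ B h z) * g z
          = (Aop (cond μ B x) {i} h z - Aop μ B h x) * g z := by
      intro z hz
      rw [hψi z hz, Aop_congr (cond_ne_zero hz).1]
    -- mean zero
    have hEa : expect (cond μ B x) (Aop (cond μ B x) {i} h) = Aop μ B h x := by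
      rw [tower hνP.1]; rfl
    have hEψ : expect (cond μ B x) (fun z => Aop (cond μ B x) {i} h z - Aop μ B h x) = 0 := by
      rw [expect_sub, hEa, expect_const hνP]
      ring
    -- E ψ² = E ψ h
    have hidem : expect (cond μ B x)
          (fun z => Aop (cond μ B x) {i} h z * Aop (cond μ B x) {i} h z)
        = expect (cond μ B x) (fun z => Aop (cond μ B x) {i} h z * h z) := by
      have hsa := selfAdj (μ := cond μ B x) (B := {i}) hνP.1 (F := h)
        (G := Aop (cond μ B x) {i} h)
      calc expect (cond μ B x)
            (fun z => Aop (cond μ B x) {i} h z * Aop (cond μ B x) {i} h z)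
          = ∑ w, cond μ B x w * (Aop (cond μ B x) {i} h w * Aop (cond μ B x) {i} h w) := rfl
        _ = ∑ w, cond μ B x w * (h w * Aop (cond μ B x) {i} (Aop (cond μ B x) {i} h) w) := hsa
        _ = expect (cond μ B x)
              (fun w => h w * Aop (cond μ B x) {i} (Aop (cond μ B x) {i} h) w) := rfl
        _ = expect (cond μ B x) (fun w => h w * Aop (cond μ B x) {i} h w) :=
            expect_congr fun w hw => by rw [Aop_idem hνP.1 hw]
        _ = expect (cond μ B x) (fun w => Aop (cond μ B x) {i} h w * h w) := by
            refine expect_congr fun w _ => mul_comm _ _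
    have hψsq : expect (cond μ B x) (fun z => (Aop (cond μ B x) {i} h z - Aop μ B h x) ^ 2)
        = expect (cond μ B x)
            (fun z => (Aop (cond μ B x) {i} h z - Aop μ B h x) * h z) := by
      have ea : expect (cond μ B x)
            (fun z => (Aop (cond μ B x) {i} h z - Aop μ B h x) ^ 2)
          = expect (cond μ B x)
              (fun z => Aop (cond μ B x) {i} h z * Aop (cond μ B x) {i} h z)
            - (2 * Aop μ B h x) * expect (cond μ B x) (Aop (cond μ B x) {i} h)
            + Aop μ B h x ^ 2 := by
        have e1 : (fun z => (Aop (cond μ B x) {i} h z - Aop μ B h x) ^ 2)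
            = fun z => (Aop (cond μ B x) {i} h z * Aop (cond μ B x) {i} h z
                - (2 * Aop μ B h x) * Aop (cond μ B x) {i} h z) + Aop μ B h x ^ 2 :=
          funext fun z => by ring
        rw [e1, expect_add, expect_sub, expect_const_mul, expect_const hνP]
      have eb : expect (cond μ B x)
            (fun z => (Aop (cond μ B x) {i} h z - Aop μ B h x) * h z)
          = expect (cond μ B x) (fun z => Aop (cond μ B x) {i} h z * h z)
            - Aop μ B h x * expect (cond μ B x) h := by
        have e1 : (fun z => (Aop (cond μ B x) {i} h z - Aop μ B h x) * h z)
            = fun z => Aop (cond μ B x) {i} h z * h z - Aop μ B h x * h z :=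
          funext fun z => by ring
        rw [e1, expect_sub, expect_const_mul]
      have hEh : expect (cond μ B x) h = Aop μ B h x := rfl
      rw [ea, eb, hidem, hEa, hEh]
      ring
    -- apply the covariance bound
    have hdisj : Disjoint B (A \ B) := Finset.disjoint_sdiff
    have hiAB : i ∉ A \ B := fun hmem => hiA (Finset.mem_sdiff.1 hmem).1
    have hjunta : Junta (A \ B) (fun z => h fun t => if t ∈ B then x t else z t) := by
      intro a b hab
      refine hh _ _ fun t ht => ?_
      by_cases htB : t ∈ B
      · simp [htB]
      · simp only [if_neg htB]
        exact hab t (Finset.mem_sdiff.2 ⟨ht, htB⟩)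
    have hU : ∀ z : ∀ t, V t, Aop (cond μ B x) {i} h z
        = Aop (cond μ B x) {i} h (Function.update x i (z i)) := by
      intro z
      refine Aop_congr fun t ht => ?_
      rw [Finset.mem_singleton] at ht; subst ht
      rw [Function.update_self]
    have hht : ∀ z : ∀ t, V t, cond μ B x z ≠ 0 →
        (fun t => if t ∈ B then x t else z t) = z := by
      intro z hz
      funext t
      by_cases htB : t ∈ B
      · simp [htB, (cond_ne_zero hz).1 t htB]
      · simp [htB]
    have hCov := cov_bound hμ hprod hε (A \ B) B x hdisj hm i hiB hiAB
      (fun a => Aop (cond μ B x) {i} h (Function.update x i a) - Aop μ B h x)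
      (fun z => h fun t => if t ∈ B then x t else z t) hjunta
    -- rewrite the covariance into ψ-terms
    have eCv : Cv (cond μ B x)
          (fun z => Aop (cond μ B x) {i} h (Function.update x i (z i)) - Aop μ B h x)
          (fun z => h fun t => if t ∈ B then x t else z t)
        = expect (cond μ B x)
            (fun z => (Aop (cond μ B x) {i} h z - Aop μ B h x) * h z) := by
      unfold Cv
      have e1 : expect (cond μ B x)
            (fun z => (Aop (cond μ B x) {i} h (Function.update x i (z i)) - Aop μ B h x)
              * h (fun t => if t ∈ B then x t else z t))
          = expect (cond μ B x)
              (fun z => (Aop (cond μ B x) {i} h z - Aop μ B h x) * h z) :=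
        expect_congr fun z hz => by rw [← hU z, hht z hz]
      have e2 : expect (cond μ B x)
            (fun z => Aop (cond μ B x) {i} h (Function.update x i (z i)) - Aop μ B h x)
          = expect (cond μ B x) (fun z => Aop (cond μ B x) {i} h z - Aop μ B h x) :=
        expect_congr fun z _ => by rw [← hU z]
      rw [e1, e2, hEψ]
      ring
    have eVrU : Vr (cond μ B x)
          (fun z => Aop (cond μ B x) {i} h (Function.update x i (z i)) - Aop μ B h x)
        = expect (cond μ B x)
            (fun z => (Aop (cond μ B x) {i} h z - Aop μ B h x) ^ 2) := by
      unfold Vr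
      have e1 : expect (cond μ B x)
            (fun z => (Aop (cond μ B x) {i} h (Function.update x i (z i)) - Aop μ B h x) ^ 2)
          = expect (cond μ B x)
              (fun z => (Aop (cond μ B x) {i} h z - Aop μ B h x) ^ 2) :=
        expect_congr fun z _ => by rw [← hU z]
      have e2 : expect (cond μ B x)
            (fun z => Aop (cond μ B x) {i} h (Function.update x i (z i)) - Aop μ B h x)
          = expect (cond μ B x) (fun z => Aop (cond μ B x) {i} h z - Aop μ B h x) :=
        expect_congr fun z _ => by rw [← hU z]
      rw [e1, e2, hEψ]
      ring
    have eVrh : Vr (cond μ B x) (fun z => h fun t => if t ∈ B then x t else z t)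
        ≤ expect (cond μ B x) (fun z => h z ^ 2) := by
      refine (Vr_le hνP _).trans (le_of_eq ?_)
      exact expect_congr fun z hz => by rw [hht z hz]
    set P := expect (cond μ B x) (fun z => (Aop (cond μ B x) {i} h z - Aop μ B h x) ^ 2)
      with hPdef
    have hP0 : 0 ≤ P := expect_nonneg hνP.1 fun z => sq_nonneg _
    have hQ0 : 0 ≤ expect (cond μ B x) (fun z => h z ^ 2) :=
      expect_nonneg hνP.1 fun z => sq_nonneg _
    have hVrh0 : 0 ≤ Vr (cond μ B x) (fun z => h fun t => if t ∈ B then x t else z t) :=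
      Vr_nonneg hνP _
    have hPb : P ≤ (A \ B).card * ε * (Real.sqrt P
        * Real.sqrt (expect (cond μ B x) (fun z => h z ^ 2))) := by
      have h1 : P ≤ |Cv (cond μ B x)
          (fun z => Aop (cond μ B x) {i} h (Function.update x i (z i)) - Aop μ B h x)
          (fun z => h fun t => if t ∈ B then x t else z t)| := by
        rw [eCv, ← hψsq]
        exact le_abs_self _
      refine h1.trans (hCov.trans ?_)
      rw [eVrU]
      refine mul_le_mul_of_nonneg_left ?_ (mul_nonneg (Nat.cast_nonneg _) hε)
      rw [Real.sqrt_mul hP0]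
      exact mul_le_mul_of_nonneg_left (Real.sqrt_le_sqrt eVrh) (Real.sqrt_nonneg _)
    have hsqrtP : Real.sqrt P ≤ (A \ B).card * ε
        * Real.sqrt (expect (cond μ B x) (fun z => h z ^ 2)) := by
      rcases eq_or_lt_of_le hP0 with hP | hP
      · rw [← hP, Real.sqrt_zero]
        exact mul_nonneg (mul_nonneg (Nat.cast_nonneg _) hε) (Real.sqrt_nonneg _)
      · have h2 : Real.sqrt P * Real.sqrt P = P := Real.mul_self_sqrt hP0
        have h3 : Real.sqrt P * Real.sqrt P
            ≤ ((A \ B).card * ε * Real.sqrt (expect (cond μ B x) (fun z => h z ^ 2)))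
              * Real.sqrt P := by
          rw [h2]
          calc P ≤ (A \ B).card * ε * (Real.sqrt P
              * Real.sqrt (expect (cond μ B x) (fun z => h z ^ 2))) := hPb
            _ = ((A \ B).card * ε
                * Real.sqrt (expect (cond μ B x) (fun z => h z ^ 2))) * Real.sqrt P := by
              ring
        exact le_of_mul_le_mul_right h3 (Real.sqrt_pos.2 hP)
    -- combine pointwise
    have eAopW : Aop μ B (fun z => (Aop μ (insert i B) h z - Aop μ B h z) * g z) x
        = expect (cond μ B x)
            (fun z => (Aop (cond μ B x) {i} h z - Aop μ B h x) * g z) := by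
      rw [Aop_eq_expect]
      exact expect_congr fun z hz => hφψ z hz
    rw [eAopW]
    have hcs := cauchy (ρ := cond μ B x) hνP.1
      (fun z => Aop (cond μ B x) {i} h z - Aop μ B h x) g
    refine hcs.trans ?_
    have e3 : Real.sqrt (expect (cond μ B x)
        (fun z => (Aop (cond μ B x) {i} h z - Aop μ B h x) ^ 2)) = Real.sqrt P := by
      rw [hPdef]
    rw [e3]
    have hcard : ((A \ B).card : ℝ) ≤ (A.card : ℝ) := by
      exact_mod_cast Finset.card_le_card (Finset.sdiff_subset)
    have hstep : Real.sqrt P * Real.sqrt (expect (cond μ B x) (fun z => g z ^ 2))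
        ≤ ((A \ B).card * ε * Real.sqrt (expect (cond μ B x) (fun z => h z ^ 2)))
          * Real.sqrt (expect (cond μ B x) (fun z => g z ^ 2)) :=
      mul_le_mul_of_nonneg_right hsqrtP (Real.sqrt_nonneg _)
    refine hstep.trans ?_
    have : ((A \ B).card * ε * Real.sqrt (expect (cond μ B x) (fun z => h z ^ 2)))
          * Real.sqrt (expect (cond μ B x) (fun z => g z ^ 2))
        ≤ (A.card * ε * Real.sqrt (expect (cond μ B x) (fun z => h z ^ 2)))
          * Real.sqrt (expect (cond μ B x) (fun z => g z ^ 2)) := by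
      have hmul : ((A \ B).card : ℝ) * ε ≤ (A.card : ℝ) * ε :=
        mul_le_mul_of_nonneg_right hcard hε
      have := mul_le_mul_of_nonneg_right hmul (Real.sqrt_nonneg
        (expect (cond μ B x) (fun z => h z ^ 2)))
      exact mul_le_mul_of_nonneg_right this (Real.sqrt_nonneg _)
    refine this.trans (le_of_eq ?_)
    have r1 : Aop μ B (fun z => h z ^ 2) x = expect (cond μ B x) (fun z => h z ^ 2) := rfl
    have r2 : Aop μ B (fun z => g z ^ 2) x = expect (cond μ B x) (fun z => g z ^ 2) := rfl
    rw [r1, r2]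
    ring
  -- global assembly
  have hglob : ∑ x, μ x * ((Aop μ (insert i B) h x - Aop μ B h x) * g x)
      = ∑ x, μ x * Aop μ B (fun z => (Aop μ (insert i B) h z - Aop μ B h z) * g z) x :=
    (tower (B := B) h0 (F := fun z => (Aop μ (insert i B) h z - Aop μ B h z) * g z)).symm
  rw [hglob]
  have hAopnn : ∀ F : (∀ t, V t) → ℝ, ∀ x, 0 ≤ Aop μ B (fun z => F z ^ 2) x :=
    fun F x => Aop_nonneg h0 fun z => sq_nonneg _
  calc |∑ x, μ x * Aop μ B (fun z => (Aop μ (insert i B) h z - Aop μ B h z) * g z) x|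
      ≤ ∑ x, |μ x * Aop μ B (fun z => (Aop μ (insert i B) h z - Aop μ B h z) * g z) x| :=
        Finset.abs_sum_le_sum_abs _ _
    _ ≤ ∑ x, μ x * (A.card * ε * (Real.sqrt (Aop μ B (fun z => h z ^ 2) x)
          * Real.sqrt (Aop μ B (fun z => g z ^ 2) x))) := by
        refine Finset.sum_le_sum fun x _ => ?_
        by_cases hx : μ x = 0
        · simp only [hx, zero_mul, abs_zero]
          exact le_rfl
        · rw [abs_mul, abs_of_nonneg (h0 x)]
          exact mul_le_mul_of_nonneg_left (hpt x hx) (h0 x)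
    _ = A.card * ε * expect μ (fun x => Real.sqrt (Aop μ B (fun z => h z ^ 2) x)
          * Real.sqrt (Aop μ B (fun z => g z ^ 2) x)) := by
        unfold expect
        rw [Finset.mul_sum]
        exact Finset.sum_congr rfl fun x _ => by ring
    _ ≤ A.card * ε * (Real.sqrt (expect μ (fun x => Aop μ B (fun z => h z ^ 2) x))
          * Real.sqrt (expect μ (fun x => Aop μ B (fun z => g z ^ 2) x))) := by
        refine mul_le_mul_of_nonneg_left ?_ (by positivity)
        have hcs := cauchy (ρ := μ) h0
          (fun x => Real.sqrt (Aop μ B (fun z => h z ^ 2) x))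
          (fun x => Real.sqrt (Aop μ B (fun z => g z ^ 2) x))
        have e1 : expect μ (fun x => Real.sqrt (Aop μ B (fun z => h z ^ 2) x) ^ 2)
            = expect μ (fun x => Aop μ B (fun z => h z ^ 2) x) :=
          expect_congr fun x _ => Real.sq_sqrt (hAopnn h x)
        have e2 : expect μ (fun x => Real.sqrt (Aop μ B (fun z => g z ^ 2) x) ^ 2)
            = expect μ (fun x => Aop μ B (fun z => g z ^ 2) x) :=
          expect_congr fun x _ => Real.sq_sqrt (hAopnn g x)
        rw [e1, e2] at hcs
        exact (le_abs_self _).trans hcs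
    _ = A.card * ε * (Real.sqrt (normSq μ h) * Real.sqrt (normSq μ g)) := by
        rw [show expect μ (fun x => Aop μ B (fun z => h z ^ 2) x)
            = expect μ (fun z => h z ^ 2) from tower h0,
          show expect μ (fun x => Aop μ B (fun z => g z ^ 2) x)
            = expect μ (fun z => g z ^ 2) from tower h0]
        rfl

end Crux
section Assembly

variable {μ : (∀ i, V i) → ℝ} {ε : ℝ}

lemma inner'_sum_left {ι : Type} (s : Finset ι) (c : ι → ℝ) (F : ι → (∀ t, V t) → ℝ)
    (G : (∀ t, V t) → ℝ) :
    inner' μ (fun x => ∑ a ∈ s, c a * F a x) G = ∑ a ∈ s, c a * inner' μ (F a) G := by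
  unfold inner'
  have e : ∀ x : ∀ t, V t, μ x * ((∑ a ∈ s, c a * F a x) * G x)
      = ∑ a ∈ s, c a * (μ x * (F a x * G x)) := by
    intro x
    rw [Finset.sum_mul, Finset.mul_sum]
    exact Finset.sum_congr rfl fun a _ => by ring
  simp_rw [e]
  rw [Finset.sum_comm]
  exact Finset.sum_congr rfl fun a _ => by rw [Finset.mul_sum]

lemma inner'_sum_right {ι : Type} (s : Finset ι) (c : ι → ℝ) (F : (∀ t, V t) → ℝ)
    (G : ι → (∀ t, V t) → ℝ) :
    inner' μ F (fun x => ∑ a ∈ s, c a * G a x) = ∑ a ∈ s, c a * inner' μ F (G a) := by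
  unfold inner'
  have e : ∀ x : ∀ t, V t, μ x * (F x * ∑ a ∈ s, c a * G a x)
      = ∑ a ∈ s, c a * (μ x * (F x * G a x)) := by
    intro x
    rw [Finset.mul_sum, Finset.mul_sum]
    exact Finset.sum_congr rfl fun a _ => by ring
  simp_rw [e]
  rw [Finset.sum_comm]
  exact Finset.sum_congr rfl fun a _ => by rw [Finset.mul_sum]

lemma ES_split {T : Finset (Fin k)} {i : Fin k} (hiT : i ∈ T) (g : (∀ t, V t) → ℝ)
    (x : ∀ t, V t) :
    ES μ T g x = ∑ B ∈ (T.erase i).powerset,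
      (-1:ℝ) ^ (T.card - B.card - 1) * (Aop μ (insert i B) g x - Aop μ B g x) := by
  obtain ⟨t, hit, rfl⟩ : ∃ t, i ∉ t ∧ insert i t = T :=
    ⟨T.erase i, Finset.notMem_erase i T, Finset.insert_erase hiT⟩
  rw [Finset.erase_insert hit]
  unfold ES
  have hdisj : Disjoint t.powerset (t.powerset.image (insert i)) := by
    rw [Finset.disjoint_left]
    intro Bs hBs hBs'
    obtain ⟨B', _, hB'e⟩ := Finset.mem_image.1 hBs'
    have hmem : i ∈ Bs := hB'e ▸ Finset.mem_insert_self i B'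
    exact hit (Finset.mem_powerset.1 hBs hmem)
  have hinj : ∀ B ∈ t.powerset, ∀ B' ∈ t.powerset, insert i B = insert i B' → B = B' := by
    intro B hB B' hB' he
    have h1 : i ∉ B := fun hmem => hit (Finset.mem_powerset.1 hB hmem)
    have h2 : i ∉ B' := fun hmem => hit (Finset.mem_powerset.1 hB' hmem)
    rw [← Finset.erase_insert h1, he, Finset.erase_insert h2]
  rw [Finset.powerset_insert, Finset.sum_union hdisj, Finset.sum_image hinj,
    ← Finset.sum_add_distrib]
  refine Finset.sum_congr rfl fun B hB => ?_
  have hBt : B ⊆ t := Finset.mem_powerset.1 hB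
  have hiBmem : i ∉ B := fun hmem => hit (hBt hmem)
  have hcardB : B.card ≤ t.card := Finset.card_le_card hBt
  rw [Finset.card_insert_of_notMem hiBmem, Finset.card_insert_of_notMem hit]
  have e1 : t.card + 1 - B.card = (t.card - B.card) + 1 := by omega
  have e2 : t.card + 1 - (B.card + 1) = t.card - B.card := by omega
  rw [e1, e2]
  have e3 : t.card - B.card + 1 - 1 = t.card - B.card := by omega
  rw [e3, pow_succ]
  ring

lemma inner_swap (h0 : ∀ w, 0 ≤ μ w) (A B : Finset (Fin k)) (i : Fin k)
    (f g : (∀ t, V t) → ℝ) :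
    ∑ x, μ x * (Aop μ A f x * (Aop μ (insert i B) g x - Aop μ B g x))
      = ∑ x, μ x * ((Aop μ (insert i B) (Aop μ A f) x - Aop μ B (Aop μ A f) x) * g x) := by
  have l1 := (selfAdj (μ := μ) (B := insert i B) h0 (F := Aop μ A f) (G := g)).symm
  have l2 := (selfAdj (μ := μ) (B := B) h0 (F := Aop μ A f) (G := g)).symm
  calc ∑ x, μ x * (Aop μ A f x * (Aop μ (insert i B) g x - Aop μ B g x))
      = (∑ x, μ x * (Aop μ A f x * Aop μ (insert i B) g x))
        - ∑ x, μ x * (Aop μ A f x * Aop μ B g x) := by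
        rw [← Finset.sum_sub_distrib]
        exact Finset.sum_congr rfl fun x _ => by ring
    _ = (∑ x, μ x * (Aop μ (insert i B) (Aop μ A f) x * g x))
        - ∑ x, μ x * (Aop μ B (Aop μ A f) x * g x) := by rw [l1, l2]
    _ = ∑ x, μ x * ((Aop μ (insert i B) (Aop μ A f) x - Aop μ B (Aop μ A f) x) * g x) := by
        rw [← Finset.sum_sub_distrib]
        exact Finset.sum_congr rfl fun x _ => by ring

lemma main_asym (hμ : IsProb μ) (hprod : EpsProduct μ ε) (hε : 0 ≤ ε)
    (S T : Finset (Fin k)) (i : Fin k) (hiT : i ∈ T) (hiS : i ∉ S)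
    (f g : (∀ t, V t) → ℝ) :
    |inner' μ (ES μ S f) (ES μ T g)|
      ≤ 2 ^ (2 * S.card + 2 * T.card) * ε * l2norm μ f * l2norm μ g := by
  have h0 : ∀ w, 0 ≤ μ w := hμ.1
  -- expand as a double sum
  have e1 : inner' μ (ES μ S f) (ES μ T g)
      = ∑ A ∈ S.powerset, (-1:ℝ) ^ (S.card - A.card) * inner' μ (Aop μ A f) (ES μ T g) :=
    inner'_sum_left S.powerset (fun A => (-1:ℝ) ^ (S.card - A.card))
      (fun A => Aop μ A f) (ES μ T g)
  have e2 : ∀ A : Finset (Fin k), inner' μ (Aop μ A f) (ES μ T g)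
      = ∑ B ∈ (T.erase i).powerset, (-1:ℝ) ^ (T.card - B.card - 1) *
          inner' μ (Aop μ A f) (fun x => Aop μ (insert i B) g x - Aop μ B g x) := by
    intro A
    rw [show ES μ T g = fun x => ∑ B ∈ (T.erase i).powerset,
        (-1:ℝ) ^ (T.card - B.card - 1) * (Aop μ (insert i B) g x - Aop μ B g x) from
      funext fun x => ES_split hiT g x]
    exact inner'_sum_right (T.erase i).powerset (fun B => (-1:ℝ) ^ (T.card - B.card - 1))
      (Aop μ A f) (fun B x => Aop μ (insert i B) g x - Aop μ B g x)
  -- per-term bound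
  have hterm : ∀ A ∈ S.powerset, ∀ B ∈ (T.erase i).powerset,
      |inner' μ (Aop μ A f) (fun x => Aop μ (insert i B) g x - Aop μ B g x)|
        ≤ S.card * ε * (Real.sqrt (normSq μ f) * Real.sqrt (normSq μ g)) := by
    intro A hA B hB
    have hAS : A ⊆ S := Finset.mem_powerset.1 hA
    have hiA : i ∉ A := fun hmem => hiS (hAS hmem)
    have hiB : i ∉ B := fun hmem => Finset.notMem_erase i T (Finset.mem_powerset.1 hB hmem)
    have hswap : inner' μ (Aop μ A f) (fun x => Aop μ (insert i B) g x - Aop μ B g x)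
        = ∑ x, μ x * ((Aop μ (insert i B) (Aop μ A f) x - Aop μ B (Aop μ A f) x) * g x) :=
      inner_swap h0 A B i f g
    rw [hswap]
    have hcrux := crux hμ hprod hε A B i hiA hiB (Aop μ A f) g Aop_junta
    refine hcrux.trans ?_
    have hc1 : (A.card : ℝ) ≤ S.card := by exact_mod_cast Finset.card_le_card hAS
    have hs1 : Real.sqrt (normSq μ (Aop μ A f)) ≤ Real.sqrt (normSq μ f) :=
      Real.sqrt_le_sqrt (normSq_Aop_le hμ)
    have step1 : (A.card : ℝ) * ε * (Real.sqrt (normSq μ (Aop μ A f)) * Real.sqrt (normSq μ g))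
        ≤ (A.card : ℝ) * ε * (Real.sqrt (normSq μ f) * Real.sqrt (normSq μ g)) := by
      refine mul_le_mul_of_nonneg_left ?_ (by positivity)
      exact mul_le_mul_of_nonneg_right hs1 (Real.sqrt_nonneg _)
    refine step1.trans ?_
    refine mul_le_mul_of_nonneg_right ?_ (by positivity)
    exact mul_le_mul_of_nonneg_right hc1 hε
  -- sum up
  have habs : |inner' μ (ES μ S f) (ES μ T g)|
      ≤ (2:ℝ) ^ S.card * (2:ℝ) ^ (T.card - 1) *
        (S.card * ε * (Real.sqrt (normSq μ f) * Real.sqrt (normSq μ g))) := by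
    rw [e1]
    calc |∑ A ∈ S.powerset, (-1:ℝ) ^ (S.card - A.card) * inner' μ (Aop μ A f) (ES μ T g)|
        ≤ ∑ A ∈ S.powerset, |(-1:ℝ) ^ (S.card - A.card) * inner' μ (Aop μ A f) (ES μ T g)| :=
          Finset.abs_sum_le_sum_abs _ _
      _ ≤ ∑ A ∈ S.powerset, ((2:ℝ) ^ (T.card - 1) *
            (S.card * ε * (Real.sqrt (normSq μ f) * Real.sqrt (normSq μ g)))) := by
          refine Finset.sum_le_sum fun A hA => ?_
          rw [abs_mul, abs_pow, abs_neg, abs_one, one_pow, one_mul, e2 A]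
          calc |∑ B ∈ (T.erase i).powerset, (-1:ℝ) ^ (T.card - B.card - 1) *
                  inner' μ (Aop μ A f) (fun x => Aop μ (insert i B) g x - Aop μ B g x)|
              ≤ ∑ B ∈ (T.erase i).powerset, |(-1:ℝ) ^ (T.card - B.card - 1) *
                  inner' μ (Aop μ A f) (fun x => Aop μ (insert i B) g x - Aop μ B g x)| :=
                Finset.abs_sum_le_sum_abs _ _
            _ ≤ ∑ _B ∈ (T.erase i).powerset,
                  (S.card * ε * (Real.sqrt (normSq μ f) * Real.sqrt (normSq μ g))) := by
                refine Finset.sum_le_sum fun B hB => ?_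
                rw [abs_mul, abs_pow, abs_neg, abs_one, one_pow, one_mul]
                exact hterm A hA B hB
            _ = (2:ℝ) ^ (T.card - 1) *
                  (S.card * ε * (Real.sqrt (normSq μ f) * Real.sqrt (normSq μ g))) := by
                rw [Finset.sum_const, Finset.card_powerset, Finset.card_erase_of_mem hiT]
                simp [nsmul_eq_mul]
      _ = (2:ℝ) ^ S.card * (2:ℝ) ^ (T.card - 1) *
            (S.card * ε * (Real.sqrt (normSq μ f) * Real.sqrt (normSq μ g))) := by
          rw [Finset.sum_const, Finset.card_powerset]
          simp [nsmul_eq_mul]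
          ring
  refine habs.trans ?_
  -- numeric bound
  have hnat : 2 ^ S.card * 2 ^ (T.card - 1) * S.card ≤ 2 ^ (2 * S.card + 2 * T.card) := by
    have h1 : S.card ≤ 2 ^ S.card := (Nat.lt_two_pow_self (n := S.card)).le
    calc 2 ^ S.card * 2 ^ (T.card - 1) * S.card
        ≤ 2 ^ S.card * 2 ^ (T.card - 1) * 2 ^ S.card := by
          exact Nat.mul_le_mul_left _ h1
      _ = 2 ^ (S.card + (T.card - 1) + S.card) := by rw [pow_add, pow_add]
      _ ≤ 2 ^ (2 * S.card + 2 * T.card) := by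
          refine Nat.pow_le_pow_right (by norm_num) (by omega)
  have hreal : (2:ℝ) ^ S.card * (2:ℝ) ^ (T.card - 1) * S.card
      ≤ (2:ℝ) ^ (2 * S.card + 2 * T.card) := by exact_mod_cast hnat
  have hnn : (0:ℝ) ≤ ε * (Real.sqrt (normSq μ f) * Real.sqrt (normSq μ g)) := by positivity
  calc (2:ℝ) ^ S.card * (2:ℝ) ^ (T.card - 1) *
        (S.card * ε * (Real.sqrt (normSq μ f) * Real.sqrt (normSq μ g)))
      = ((2:ℝ) ^ S.card * (2:ℝ) ^ (T.card - 1) * S.card) *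
        (ε * (Real.sqrt (normSq μ f) * Real.sqrt (normSq μ g))) := by ring
    _ ≤ (2:ℝ) ^ (2 * S.card + 2 * T.card) *
        (ε * (Real.sqrt (normSq μ f) * Real.sqrt (normSq μ g))) :=
        mul_le_mul_of_nonneg_right hreal hnn
    _ = 2 ^ (2 * S.card + 2 * T.card) * ε * l2norm μ f * l2norm μ g := by
        unfold l2norm
        ring

end Assembly
theorem statement14 (k : ℕ) (hk : 1 ≤ k)
    (V : Fin k → Type) [∀ i, Fintype (V i)] [∀ i, DecidableEq (V i)]
    (μ : (∀ i, V i) → ℝ) (ε : ℝ) (hε : 0 ≤ ε) (hμ : IsProb μ) (hprod : EpsProduct μ ε)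
    (S T : Finset (Fin k)) (hST : S ≠ T) (f g : (∀ i, V i) → ℝ) :
    inner' μ (ES μ S f) (ES μ T g) ≤
      2 ^ (2 * S.card + 2 * T.card) * ε * l2norm μ f * l2norm μ g := by
  by_cases hTS : ∃ i, i ∈ T ∧ i ∉ S
  · obtain ⟨i, hiT, hiS⟩ := hTS
    exact (le_abs_self _).trans (main_asym hμ hprod hε S T i hiT hiS f g)
  · have hT : T ⊆ S := by
      intro a ha
      by_contra hc
      exact hTS ⟨a, ha, hc⟩
    have hS : ∃ i, i ∈ S ∧ i ∉ T := by
      by_contra hc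
      push_neg at hc
      exact hST (Finset.Subset.antisymm (fun a ha => hc a ha) hT)
    obtain ⟨i, hiS, hiT⟩ := hS
    have hsym : inner' μ (ES μ S f) (ES μ T g) = inner' μ (ES μ T g) (ES μ S f) := by
      unfold inner'
      exact Finset.sum_congr rfl fun x _ => by ring
    rw [hsym]
    have hmain := (le_abs_self _).trans (main_asym hμ hprod hε T S i hiS hiT g f)
    refine hmain.trans (le_of_eq ?_)
    rw [show 2 * T.card + 2 * S.card = 2 * S.card + 2 * T.card from by omega]
    ring

end GLL
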